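/- Let 0<\beta<\theta<1 with \log\theta/\log\beta irrational. Then the set L = { m\log\beta + n\log\theta : m,n \in N }, listed in decreasing order as (y_j), satisfies y_j - y_{j+1} \to 0 as j \to \infty. -/

import Mathlib

open Filter

lemma ratio_rat {a b : ℝ} (ha : a ≠ 0) {c d : ℤ} (hd : d ≠ 0)
    (h : (c : ℝ) * a = (d : ℝ) * b) : ¬ Irrational (b / a) := by
  intro hirr
  refine hirr ⟨(c : ℚ) / (d : ℚ), ?_⟩
  have hd' : (d : ℝ) ≠ 0 := Int.cast_ne_zero.mpr hd
  push_cast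
  rw [div_eq_div_iff hd' ha]
  linear_combination h

lemma classify {a b : ℝ} (hab : a < b) (hb : b < 0)
    {z : ℝ} {k l : ℤ} (hz : z = k * a + l * b) (hz0 : z ≠ 0) (hsmall : |z| < -b) :
    (∃ p q : ℕ, 1 ≤ p ∧ 1 ≤ q ∧ z = p * a - q * b) ∨
    (∃ p q : ℕ, 1 ≤ p ∧ 1 ≤ q ∧ z = q * b - p * a) := by
  have ha : a < 0 := hab.trans hb
  rcases lt_trichotomy k 0 with hk | hk | hk
  · rcases lt_trichotomy l 0 with hl | hl | hl
    · -- k<0, l<0 : z > 0, z ≥ -b, contradiction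
      exfalso
      have hk' : (k : ℝ) ≤ -1 := by exact_mod_cast (show k ≤ -1 by omega)
      have hl' : (l : ℝ) ≤ -1 := by exact_mod_cast (show l ≤ -1 by omega)
      have hzb : -b ≤ z := by
        rw [hz]; nlinarith
      have : z ≤ |z| := le_abs_self z
      linarith
    · exfalso
      subst hl
      have hk' : (k : ℝ) ≤ -1 := by exact_mod_cast (show k ≤ -1 by omega)
      have hzb : -a ≤ z := by rw [hz]; push_cast; nlinarith
      have : z ≤ |z| := le_abs_self z
      linarith
    · right
      refine ⟨(-k).toNat, l.toNat, ?_, ?_, ?_⟩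
      · omega
      · omega
      · have h1 : (((-k).toNat : ℕ) : ℝ) = -(k : ℝ) := by
          exact_mod_cast Int.toNat_of_nonneg (by omega)
        have h2 : ((l.toNat : ℕ) : ℝ) = (l : ℝ) := by
          exact_mod_cast Int.toNat_of_nonneg (by omega)
        rw [hz, h1, h2]; ring
  · subst hk
    rcases eq_or_ne l 0 with hl | hl
    · exfalso; subst hl; simp at hz; exact hz0 hz
    · exfalso
      have hl' : (1 : ℝ) ≤ |(l : ℝ)| := by
        have : (1 : ℤ) ≤ |l| := Int.one_le_abs hl
        calc (1:ℝ) ≤ (|l| : ℤ) := by exact_mod_cast this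
          _ = |(l : ℝ)| := by push_cast; rfl
      have : |z| = |(l : ℝ)| * |b| := by rw [hz]; push_cast; rw [zero_mul, zero_add, abs_mul]
      have hbb : |b| = -b := abs_of_neg hb
      nlinarith
  · rcases lt_trichotomy l 0 with hl | hl | hl
    · left
      refine ⟨k.toNat, (-l).toNat, ?_, ?_, ?_⟩
      · omega
      · omega
      · have h1 : ((k.toNat : ℕ) : ℝ) = (k : ℝ) := by
          exact_mod_cast Int.toNat_of_nonneg (by omega)
        have h2 : (((-l).toNat : ℕ) : ℝ) = -(l : ℝ) := by
          exact_mod_cast Int.toNat_of_nonneg (by omega)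
        rw [hz, h1, h2]; ring
    · exfalso
      subst hl
      have hk' : (1 : ℝ) ≤ (k : ℝ) := by exact_mod_cast hk
      have hzb : z ≤ a := by rw [hz]; push_cast; nlinarith
      have : -z ≤ |z| := neg_le_abs z
      linarith
    · exfalso
      have hk' : (1 : ℝ) ≤ (k : ℝ) := by exact_mod_cast hk
      have hl' : (1 : ℝ) ≤ (l : ℝ) := by exact_mod_cast hl
      have hzb : z ≤ -(-b) := by rw [hz]; nlinarith
      have : -z ≤ |z| := neg_le_abs z
      linarith

lemma both_steps {a b : ℝ} (hab : a < b) (hb : b < 0)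
    (hirr : Irrational (b / a)) {ε : ℝ} (hε : 0 < ε) :
    ∃ p q p' q' : ℕ, 1 ≤ p ∧ 1 ≤ q ∧ 1 ≤ p' ∧ 1 ≤ q' ∧
      (-ε < (p : ℝ) * a - q * b ∧ (p : ℝ) * a - q * b < 0) ∧
      (0 < (p' : ℝ) * a - q' * b ∧ (p' : ℝ) * a - q' * b < ε) := by
  have ha : a < 0 := hab.trans hb
  have ha' : a ≠ 0 := ne_of_lt ha
  set δ : ℝ := min ε (-b / 2) with hδ
  have hδpos : 0 < δ := lt_min hε (by linarith)
  have hδε : δ ≤ ε := min_le_left _ _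
  have hδb : δ ≤ -b / 2 := min_le_right _ _
  -- dense subgroup
  set S := AddSubgroup.closure ({a, b} : Set ℝ) with hS
  have hdense : Dense (S : Set ℝ) := by
    rcases S.dense_or_cyclic with h | ⟨g, hg⟩
    · exact h
    · exfalso
      have haS : a ∈ S := AddSubgroup.subset_closure (Set.mem_insert _ _)
      have hbS : b ∈ S := AddSubgroup.subset_closure (Set.mem_insert_of_mem _ rfl)
      rw [hg, AddSubgroup.mem_closure_singleton] at haS hbS
      obtain ⟨k, hk⟩ := haS
      obtain ⟨l, hl⟩ := hbS
      rw [zsmul_eq_mul] at hk hl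
      have hk0 : k ≠ 0 := by
        rintro rfl; simp at hk; exact ha' hk.symm
      refine ratio_rat ha' (c := l) hk0 ?_ hirr
      rw [← hk, ← hl]; ring
  -- a nonzero small element of S
  obtain ⟨z, hzS, hz1, hz2⟩ : ∃ z ∈ (S : Set ℝ), z ∈ Set.Ioo 0 δ := by
    have := hdense.exists_mem_open isOpen_Ioo (Set.nonempty_Ioo.2 hδpos)
    simpa using this
  have hzrep : ∃ k l : ℤ, z = k * a + l * b := by
    have : S = AddSubgroup.closure {a} ⊔ AddSubgroup.closure {b} := by
      rw [hS, Set.insert_eq, AddSubgroup.closure_union]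
    rw [SetLike.mem_coe, this, AddSubgroup.mem_sup] at hzS
    obtain ⟨u, hu, v, hv, huv⟩ := hzS
    rw [AddSubgroup.mem_closure_singleton] at hu hv
    obtain ⟨k, hk⟩ := hu; obtain ⟨l, hl⟩ := hv
    exact ⟨k, l, by rw [← huv, ← hk, ← hl, zsmul_eq_mul, zsmul_eq_mul]⟩
  obtain ⟨k, l, hz⟩ := hzrep
  have hzsmall : |z| < -b := by
    rw [abs_of_pos hz1]; linarith
  have hz0 : z ≠ 0 := ne_of_gt hz1
  -- the floor
  set K : ℤ := ⌊(-a) / z⌋ with hK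
  have hK2 : (2 : ℤ) ≤ K := by
    rw [hK, Int.le_floor]
    rw [le_div_iff₀ hz1]
    push_cast
    linarith
  have hKle : (K : ℝ) * z ≤ -a := by
    have := Int.floor_le ((-a) / z)
    rw [← hK] at this
    calc (K : ℝ) * z ≤ ((-a)/z) * z := by nlinarith
      _ = -a := by field_simp
  have hKgt : -a < ((K : ℝ) + 1) * z := by
    have := Int.lt_floor_add_one ((-a) / z)
    rw [← hK] at this
    calc -a = ((-a)/z) * z := by field_simp
      _ < ((K : ℝ) + 1) * z := by nlinarith
  have hKcast : ((K.toNat : ℕ) : ℝ) = (K : ℝ) := by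
    exact_mod_cast Int.toNat_of_nonneg (by omega)
  have hwlow : -z < a + K * z := by linarith
  have hwhigh : a + (K : ℝ) * z ≤ 0 := by linarith
  rcases classify hab hb hz hz0 hzsmall with ⟨p, q, hp, hq, hrep⟩ | ⟨p, q, hp, hq, hrep⟩
  · -- z = p a - q b ∈ (0, δ) : gives the positive step; flip for negative
    have hqZ : ((q : ℤ)) ≠ 0 := by exact_mod_cast Nat.one_le_iff_ne_zero.mp hq
    have hwne : a + (K : ℝ) * z ≠ 0 := by
      intro h0
      have heq : ((K * p + 1 : ℤ) : ℝ) * a = ((K * q : ℤ) : ℝ) * b := by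
        push_cast; rw [hrep] at h0; push_cast at h0; nlinarith
      exact ratio_rat ha' (mul_ne_zero (by omega) hqZ) heq hirr
    have h2 : 2 ≤ K.toNat * q := by
      calc 2 ≤ K.toNat := by omega
        _ = K.toNat * 1 := (Nat.mul_one _).symm
        _ ≤ K.toNat * q := Nat.mul_le_mul_left _ hq
    refine ⟨K.toNat * p + 1, K.toNat * q, p, q, by omega, by omega, hp, hq, ?_, ?_⟩
    · have hveq : ((K.toNat * p + 1 : ℕ) : ℝ) * a - ((K.toNat * q : ℕ) : ℝ) * b
          = a + (K : ℝ) * z := by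
        push_cast [hKcast]; rw [hrep]; ring
      rw [hveq]
      exact ⟨by linarith, lt_of_le_of_ne hwhigh hwne⟩
    · rw [← hrep]
      exact ⟨hz1, lt_of_lt_of_le hz2 hδε⟩
  · -- z = q b - p a ∈ (0, δ)
    have hqZ : ((q : ℤ)) ≠ 0 := by exact_mod_cast Nat.one_le_iff_ne_zero.mp hq
    have hwne : a + (K : ℝ) * z ≠ 0 := by
      intro h0
      have heq : ((K * p - 1 : ℤ) : ℝ) * a = ((K * q : ℤ) : ℝ) * b := by
        push_cast; rw [hrep] at h0; push_cast at h0; nlinarith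
      exact ratio_rat ha' (mul_ne_zero (by omega) hqZ) heq hirr
    have h2p : 2 ≤ K.toNat * p := by
      calc 2 ≤ K.toNat := by omega
        _ = K.toNat * 1 := (Nat.mul_one _).symm
        _ ≤ K.toNat * p := Nat.mul_le_mul_left _ hp
    have h2 : 2 ≤ K.toNat * q := by
      calc 2 ≤ K.toNat := by omega
        _ = K.toNat * 1 := (Nat.mul_one _).symm
        _ ≤ K.toNat * q := Nat.mul_le_mul_left _ hq
    refine ⟨p, q, K.toNat * p - 1, K.toNat * q, hp, hq, by omega, by omega, ?_, ?_⟩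
    · have hveq : ((p : ℕ) : ℝ) * a - ((q : ℕ) : ℝ) * b = -z := by
        rw [hrep]; ring
      rw [hveq]
      constructor
      · linarith
      · linarith
    · have hveq : ((K.toNat * p - 1 : ℕ) : ℝ) * a - ((K.toNat * q : ℕ) : ℝ) * b
          = -(a + (K : ℝ) * z) := by
        push_cast [Nat.cast_sub (show 1 ≤ K.toNat * p by omega), hKcast]
        rw [hrep]; ring
      rw [hveq]
      constructor
      · have := lt_of_le_of_ne hwhigh hwne
        linarith
      · linarith

theorem gaps_tend_to_zero
    (β θ : ℝ) (hβ : 0 < β) (hβθ : β < θ) (hθ : θ < 1)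
    (hirr : Irrational (Real.log θ / Real.log β))
    (y : ℕ → ℝ) (hmono : StrictAnti y)
    (hrange : Set.range y =
      {x : ℝ | ∃ m n : ℕ, 0 < m ∧ 0 < n ∧
        x = m * Real.log β + n * Real.log θ}) :
    Tendsto (fun j => y j - y (j + 1)) atTop (nhds 0) := by
  set a : ℝ := Real.log β with haa
  set b : ℝ := Real.log θ with hbb
  have hθ0 : 0 < θ := hβ.trans hβθ
  have ha : a < 0 := Real.log_neg hβ (hβθ.trans hθ)
  have hb : b < 0 := Real.log_neg hθ0 hθ
  have hab : a < b := Real.log_lt_log hβ hβθ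
  -- membership helpers
  have hmem : ∀ m n : ℕ, 0 < m → 0 < n → ∃ j, y j = (m : ℝ) * a + n * b := by
    intro m n hm hn
    have : ((m : ℝ) * a + n * b) ∈ Set.range y := by
      rw [hrange]; exact ⟨m, n, hm, hn, rfl⟩
    obtain ⟨j, hj⟩ := this
    exact ⟨j, hj⟩
  have hrep : ∀ j : ℕ, ∃ m n : ℕ, 0 < m ∧ 0 < n ∧ y j = (m : ℝ) * a + n * b := by
    intro j
    have : y j ∈ Set.range y := ⟨j, rfl⟩
    rw [hrange] at this
    exact this
  -- y is eventually below any bound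
  have hbelow : ∀ C : ℝ, ∃ N : ℕ, ∀ j ≥ N, y j < C := by
    intro C
    obtain ⟨m, hm⟩ := exists_nat_gt (max 1 ((b - C) / (-a)))
    have hm1 : (1 : ℝ) < m := lt_of_le_of_lt (le_max_left _ _) hm
    have hm0 : 0 < m := by
      have : (0 : ℝ) < m := by linarith
      exact_mod_cast this
    have hmC : (m : ℝ) * a + 1 * b < C := by
      have h2 : (b - C) / (-a) < m := lt_of_le_of_lt (le_max_right _ _) hm
      have : b - C < m * (-a) := by
        rw [div_lt_iff₀ (by linarith : (0:ℝ) < -a)] at h2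
        linarith
      nlinarith
    obtain ⟨k, hk⟩ := hmem m 1 hm0 one_pos
    push_cast at hk
    refine ⟨k + 1, fun j hj => ?_⟩
    have : y j ≤ y (k + 1) := hmono.antitone hj
    have : y (k + 1) < y k := hmono (Nat.lt_succ_self k)
    calc y j ≤ y (k+1) := hmono.antitone hj
      _ < y k := hmono (Nat.lt_succ_self k)
      _ = (m : ℝ) * a + 1 * b := hk
      _ < C := hmC
  rw [Metric.tendsto_atTop]
  intro ε hε
  obtain ⟨p, q, p', q', hp, hq, hp', hq', ⟨hneg1, hneg2⟩, ⟨hpos1, hpos2⟩⟩ :=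
    both_steps hab hb hirr hε
  obtain ⟨N, hN⟩ := hbelow ((p' : ℝ) * a + q * b)
  refine ⟨N, fun j hj => ?_⟩
  obtain ⟨m, n, hm, hn, hyj⟩ := hrep j
  have hyjC : y j < (p' : ℝ) * a + q * b := hN j hj
  -- find an element of L strictly between y j - ε and y j
  have key : ∃ x : ℝ, (∃ i, y i = x) ∧ y j - ε < x ∧ x < y j := by
    by_cases hcase : q < n
    · -- use negative step p a - q b
      obtain ⟨i, hi⟩ := hmem (m + p) (n - q) (by omega) (by omega)
      refine ⟨y i, ⟨i, rfl⟩, ?_, ?_⟩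
      · rw [hi, hyj]
        push_cast [Nat.cast_sub hcase.le]
        linarith
      · rw [hi, hyj]
        push_cast [Nat.cast_sub hcase.le]
        linarith
    · -- then m > p', use positive step
      have hmp : p' < m := by
        by_contra hmp
        push_neg at hmp
        have h1 : (m : ℝ) ≤ p' := by exact_mod_cast hmp
        have h2 : (n : ℝ) ≤ q := by exact_mod_cast not_lt.mp hcase
        have : (p' : ℝ) * a + q * b ≤ y j := by
          rw [hyj]; nlinarith
        linarith
      obtain ⟨i, hi⟩ := hmem (m - p') (n + q') (by omega) (by omega)
      refine ⟨y i, ⟨i, rfl⟩, ?_, ?_⟩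
      · rw [hi, hyj]
        push_cast [Nat.cast_sub hmp.le]
        linarith
      · rw [hi, hyj]
        push_cast [Nat.cast_sub hmp.le]
        linarith
  obtain ⟨x, ⟨i, hi⟩, hx1, hx2⟩ := key
  have hij : j < i := by
    rw [← hi] at hx2
    exact (hmono.lt_iff_gt).mp hx2
  have hyi : y i ≤ y (j + 1) := hmono.antitone (by omega)
  have hgap : y j - y (j + 1) < ε := by
    have : y j - ε < y (j+1) := by rw [← hi] at hx1; linarith
    linarith
  have hgap0 : 0 < y j - y (j + 1) := by
    have := hmono (Nat.lt_succ_self j)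
    linarith
  rw [Real.dist_eq, sub_zero, abs_of_pos hgap0]
  exact hgap
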